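/- arXiv:2208.04765 — 2 statements merged into one kernel-verified Lean document; each statement's English description precedes it below -/
import Mathlib

section
/- Let M₁ be single-valued with single-valued resolvent res_{α₂M₁}, M₂ have single-valued resolvent res_{α₁M₂}, and M₃ be single-valued, with α₁, α₂ > 0. If (v, i) is a fixed point of the iteration v ↦ res_{α₁M₂}(v - α₁M₃(v) + α₁ i), i ↦ res_{α₂M₁}(i - α₂ v + α₂ v*), then v* ∈ (M₁ + (M₂ + M₃)^{-1})(i), i.e., i solves the three-element series-parallel circuit equation 0 ∈ M₁(i) + (M₂ + M₃)^{-1}(i) - v*. -/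
open RealInnerProductSpace

/-- Nested forward/backward splitting: a fixed point `(v, i)` of the iteration solves the
three-element series-parallel circuit equation `v* ∈ (M₁ + (M₂ + M₃)⁻¹)(i)`. -/
theorem nested_splitting_fixed_point_solves_circuit
    {H : Type*} [NormedAddCommGroup H] [InnerProductSpace ℝ H] [CompleteSpace H]
    (M₁ M₃ : H → H) (M₂ : Set (H × H))
    (α₁ α₂ : ℝ) (hα₁ : 0 < α₁) (hα₂ : 0 < α₂)
    (J₂ : H → H)  -- resolvent of α₁ M₂
    (hJ₂ : ∀ u : H, ∃ y : H, (J₂ u, y) ∈ M₂ ∧ J₂ u + α₁ • y = u)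
    (hJ₂uniq : ∀ u x y : H, (x, y) ∈ M₂ → x + α₁ • y = u → J₂ u = x)
    (J₁ : H → H)  -- resolvent of α₂ M₁
    (hJ₁ : ∀ u : H, J₁ u + α₂ • M₁ (J₁ u) = u)
    (v i vs : H)
    (hv : J₂ (v - α₁ • M₃ v + α₁ • i) = v)
    (hi : J₁ (i - α₂ • v + α₂ • vs) = i) :
    ∃ v' y : H, (v', y) ∈ M₂ ∧ y + M₃ v' = i ∧ M₁ i + v' = vs := by
  obtain ⟨y, hy, heq⟩ := hJ₂ (v - α₁ • M₃ v + α₁ • i)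
  rw [hv] at hy heq
  refine ⟨v, y, hy, ?_, ?_⟩
  · have : α₁ • y = α₁ • (i - M₃ v) := by
      have := heq
      rw [smul_sub]
      linear_combination (norm := module) this
    have hy' : y = i - M₃ v := smul_right_injective H (ne_of_gt hα₁) this
    rw [hy']; abel
  · have h := hJ₁ (i - α₂ • v + α₂ • vs)
    rw [hi] at h
    have : α₂ • M₁ i = α₂ • (vs - v) := by
      rw [smul_sub]; linear_combination (norm := module) h
    have := smul_right_injective H (ne_of_gt hα₂) this
    rw [this]; abel
end

section
/- Conversely, if v* = M₁(i) + v for some v with (v, i) ∈ M₂ + M₃ (i.e., i ∈ (M₂+M₃)(v)), then (v, i) is a fixed point of the nested splitting iteration v ↦ res_{α₁M₂}(v - α₁M₃(v) + α₁i), i ↦ res_{α₂M₁}(i - α₂v + α₂v*). -/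
open RealInnerProductSpace

/-- Converse of the nested splitting: a solution of the three-element series-parallel
circuit equation is a fixed point of the nested forward/backward iteration. -/
theorem circuit_solution_is_nested_splitting_fixed_point
    {H : Type*} [NormedAddCommGroup H] [InnerProductSpace ℝ H] [CompleteSpace H]
    (M₁ M₃ : H → H) (M₂ : Set (H × H))
    (α₁ α₂ : ℝ) (hα₁ : 0 < α₁) (hα₂ : 0 < α₂)
    (J₂ : H → H)  -- resolvent of α₁ M₂
    (hJ₂ : ∀ u : H, ∃ y : H, (J₂ u, y) ∈ M₂ ∧ J₂ u + α₁ • y = u)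
    (hJ₂uniq : ∀ u x y : H, (x, y) ∈ M₂ → x + α₁ • y = u → J₂ u = x)
    (J₁ : H → H)  -- resolvent of α₂ M₁
    (hJ₁ : ∀ u : H, J₁ u + α₂ • M₁ (J₁ u) = u)
    (hJ₁uniq : ∀ u x : H, x + α₂ • M₁ x = u → J₁ u = x)
    (v i vs : H)
    (hvi : ∃ y : H, (v, y) ∈ M₂ ∧ y + M₃ v = i)
    (hvs : M₁ i + v = vs) :
    J₂ (v - α₁ • M₃ v + α₁ • i) = v ∧ J₁ (i - α₂ • v + α₂ • vs) = i := by
  obtain ⟨y, hy, hyi⟩ := hvi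
  constructor
  · exact hJ₂uniq _ v y hy (by rw [← hyi]; module)
  · exact hJ₁uniq _ i (by rw [← hvs]; module)
end
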